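/- Fix an adiabatic index γ with 1 < γ ≤ 5/3 and let z > 0. Define Q(w,z) = 2(γ−1)w³ − (2(γ−1)z + 8γ − 3γ² − 3)w² + ((2γ² − γ + 3)z + γ(5−γ))w − γ(γ+1)(z+γ)², a₀(γ) = 9γ⁴ − 42γ³ + 46γ² − 18γ + 9, Δ(γ) = 3(36γ⁴ − 96γ³ + 179γ² − 166γ + 63), and z± = (12γ² − 19γ + 15 ± √Δ(γ)) / (4(γ−1)). Then Δ(γ) > 0 (so z₋ and z₊ are real with z₋ < z₊), and the function w ↦ Q(w,z) is monotonically increasing on (0, +∞) if and only if either (a) a₀(γ) > 0 and z₋ ≤ z ≤ z₊, or (b) a₀(γ) ≤ 0 and 0 < z ≤ z₊. -/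

import Mathlib

lemma aux_deriv_nonneg {f : ℝ → ℝ} {d w : ℝ} (hw : (0:ℝ) < w)
    (hf : HasDerivAt f d w) (hm : MonotoneOn f (Set.Ioi 0)) : 0 ≤ d := by
  have h := hasDerivAt_iff_tendsto_slope.mp hf
  have h2 : Filter.Tendsto (slope f w) (nhdsWithin w (Set.Ioi w)) (nhds d) :=
    h.mono_left (nhdsWithin_mono _ fun y hy => ne_of_gt hy)
  refine ge_of_tendsto h2 ?_
  filter_upwards [self_mem_nhdsWithin] with y hy
  have hy' : w < y := hy
  have h1 : f w ≤ f y := hm (Set.mem_Ioi.mpr hw) (Set.mem_Ioi.mpr (lt_trans hw hy')) hy'.le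
  rw [slope_def_field]
  exact div_nonneg (by linarith) (by linarith)

set_option maxHeartbeats 2000000 in
theorem Q_monotone_iff (γ z : ℝ) (hγ1 : 1 < γ) (hγ2 : γ ≤ 5 / 3) (hz : 0 < z) :
    let Δ : ℝ := 3 * (36 * γ ^ 4 - 96 * γ ^ 3 + 179 * γ ^ 2 - 166 * γ + 63)
    let zm : ℝ := (12 * γ ^ 2 - 19 * γ + 15 - Real.sqrt Δ) / (4 * (γ - 1))
    let zp : ℝ := (12 * γ ^ 2 - 19 * γ + 15 + Real.sqrt Δ) / (4 * (γ - 1))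
    let a0 : ℝ := 9 * γ ^ 4 - 42 * γ ^ 3 + 46 * γ ^ 2 - 18 * γ + 9
    0 < Δ ∧ zm < zp ∧
      (MonotoneOn (fun w : ℝ =>
          2 * (γ - 1) * w ^ 3 - (2 * (γ - 1) * z + 8 * γ - 3 * γ ^ 2 - 3) * w ^ 2
            + ((2 * γ ^ 2 - γ + 3) * z + γ * (5 - γ)) * w - γ * (γ + 1) * (z + γ) ^ 2)
          (Set.Ioi 0)
        ↔ (0 < a0 ∧ zm ≤ z ∧ z ≤ zp) ∨ (a0 ≤ 0 ∧ z ≤ zp)) := by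
  intro Δ zm zp a0
  have hΔdef : Δ = 3 * (36 * γ ^ 4 - 96 * γ ^ 3 + 179 * γ ^ 2 - 166 * γ + 63) := rfl
  have ha0def : a0 = 9 * γ ^ 4 - 42 * γ ^ 3 + 46 * γ ^ 2 - 18 * γ + 9 := rfl
  have hg : (0:ℝ) < γ - 1 := by linarith
  have hΔpos : 0 < Δ := by
    rw [hΔdef]
    nlinarith [sq_nonneg (γ - 1), mul_pos (mul_pos hg hg) hg,
      mul_pos (mul_pos (mul_pos hg hg) hg) hg]
  have hs2 : Real.sqrt Δ ^ 2 = Δ := Real.sq_sqrt hΔpos.le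
  have hspos : 0 < Real.sqrt Δ := Real.sqrt_pos.mpr hΔpos
  refine ⟨hΔpos, ?_, ?_⟩
  · show (12 * γ ^ 2 - 19 * γ + 15 - Real.sqrt Δ) / (4 * (γ - 1)) <
      (12 * γ ^ 2 - 19 * γ + 15 + Real.sqrt Δ) / (4 * (γ - 1))
    rw [div_lt_div_iff₀ (by linarith) (by linarith)]
    nlinarith [mul_pos hspos hg]
  set s := Real.sqrt Δ with hs_def
  set B := 2 * (γ - 1) * z + 8 * γ - 3 * γ ^ 2 - 3 with hB
  set C := (2 * γ ^ 2 - γ + 3) * z + γ * (5 - γ) with hC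
  set K := γ * (γ + 1) * (z + γ) ^ 2 with hK
  have hBpos : 0 < B := by
    rw [hB]
    nlinarith [mul_pos hg hz, mul_nonneg (show (0:ℝ) ≤ 5 - 3 * γ by linarith) hg.le]
  have hCpos : 0 < C := by
    rw [hC]
    nlinarith [mul_pos (show (0:ℝ) < 2 * γ ^ 2 - γ + 3 by nlinarith [sq_nonneg γ]) hz]
  have hd : ∀ w : ℝ, HasDerivAt
      (fun w : ℝ => 2 * (γ - 1) * w ^ 3 - B * w ^ 2 + C * w - K)
      (6 * (γ - 1) * w ^ 2 - 2 * B * w + C) w := by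
    intro w
    have h3 : HasDerivAt (fun x : ℝ => x ^ 3) (3 * w ^ 2) w := by
      simpa using hasDerivAt_pow 3 w
    have h2 : HasDerivAt (fun x : ℝ => x ^ 2) (2 * w) w := by
      simpa using hasDerivAt_pow 2 w
    have h1 : HasDerivAt (fun x : ℝ => x) 1 w := hasDerivAt_id w
    have h : HasDerivAt (fun x : ℝ => 2 * (γ - 1) * x ^ 3 - B * x ^ 2 + C * x - K)
        (2 * (γ - 1) * (3 * w ^ 2) - B * (2 * w) + C * 1) w := (((h3.const_mul (2 * (γ - 1))).sub (h2.const_mul B)).add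
      (h1.const_mul C)).sub_const K
    convert h using 1
    ring
  have hmono : MonotoneOn (fun w : ℝ => 2 * (γ - 1) * w ^ 3 - B * w ^ 2 + C * w - K)
      (Set.Ioi 0) ↔ B ^ 2 ≤ 6 * (γ - 1) * C := by
    constructor
    · intro hm
      have h6 : (0:ℝ) < 6 * (γ - 1) := by linarith
      have hw0 : 0 < B / (6 * (γ - 1)) := div_pos hBpos h6
      have h := aux_deriv_nonneg hw0 (hd _) hm
      have heq : 6 * (γ - 1) * (B / (6 * (γ - 1))) ^ 2 - 2 * B * (B / (6 * (γ - 1))) + C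
          = C - B ^ 2 / (6 * (γ - 1)) := by
        field_simp
        ring
      rw [heq, sub_nonneg, div_le_iff₀ h6] at h
      nlinarith [h]
    · intro hdisc
      apply monotoneOn_of_deriv_nonneg (convex_Ioi 0)
      · exact Continuous.continuousOn (by fun_prop)
      · intro x hx
        exact (hd x).differentiableAt.differentiableWithinAt
      · intro x hx
        rw [(hd x).deriv]
        rw [interior_Ioi] at hx
        nlinarith [sq_nonneg (6 * (γ - 1) * x - B), hdisc, hg]
  have hp : (0:ℝ) < 12 * γ ^ 2 - 19 * γ + 15 := by nlinarith [sq_nonneg (24 * γ - 19)]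
  have key : (4 * (γ - 1) * z - (12 * γ ^ 2 - 19 * γ + 15)) ^ 2 - s ^ 2
      = 4 * (B ^ 2 - 6 * (γ - 1) * C) := by
    rw [hs2, hΔdef, hB, hC]
    ring
  have hdisc_iff : B ^ 2 ≤ 6 * (γ - 1) * C ↔
      ((12 * γ ^ 2 - 19 * γ + 15) - s ≤ 4 * (γ - 1) * z ∧
        4 * (γ - 1) * z ≤ (12 * γ ^ 2 - 19 * γ + 15) + s) := by
    constructor
    · intro h
      have ht2 : (4 * (γ - 1) * z - (12 * γ ^ 2 - 19 * γ + 15)) ^ 2 ≤ s ^ 2 := by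
        linarith [key, h]
      generalize hT : 4 * (γ - 1) * z - (12 * γ ^ 2 - 19 * γ + 15) = t at ht2
      have h1 : t ≤ s := by nlinarith [ht2, hspos]
      have h2 : -s ≤ t := by nlinarith [ht2, hspos]
      constructor <;> linarith
    · rintro ⟨h1, h2⟩
      have h3 : 0 ≤ s - (4 * (γ - 1) * z - (12 * γ ^ 2 - 19 * γ + 15)) := by linarith
      have h4 : 0 ≤ s + (4 * (γ - 1) * z - (12 * γ ^ 2 - 19 * γ + 15)) := by linarith
      have h5 := mul_nonneg h3 h4
      nlinarith [key, h5]
  have hzm_iff : zm ≤ z ↔ (12 * γ ^ 2 - 19 * γ + 15) - s ≤ 4 * (γ - 1) * z := by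
    show (12 * γ ^ 2 - 19 * γ + 15 - s) / (4 * (γ - 1)) ≤ z ↔ _
    rw [div_le_iff₀ (show (0:ℝ) < 4 * (γ - 1) by linarith)]
    constructor <;> intro h <;> nlinarith [h]
  have hzp_iff : z ≤ zp ↔ 4 * (γ - 1) * z ≤ (12 * γ ^ 2 - 19 * γ + 15) + s := by
    show z ≤ (12 * γ ^ 2 - 19 * γ + 15 + s) / (4 * (γ - 1)) ↔ _
    rw [le_div_iff₀ (show (0:ℝ) < 4 * (γ - 1) by linarith)]
    constructor <;> intro h <;> nlinarith [h]
  rw [hmono, hdisc_iff, ← hzm_iff, ← hzp_iff]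
  by_cases ha : 0 < a0
  · constructor
    · rintro ⟨h1, h2⟩
      exact Or.inl ⟨ha, h1, h2⟩
    · rintro (⟨_, h1, h2⟩ | ⟨h, _⟩)
      · exact ⟨h1, h2⟩
      · linarith
  · push_neg at ha
    have hp2 : (12 * γ ^ 2 - 19 * γ + 15) ^ 2 ≤ s ^ 2 := by
      rw [hs2, hΔdef]
      rw [ha0def] at ha
      nlinarith [ha]
    have hps : 12 * γ ^ 2 - 19 * γ + 15 ≤ s := by nlinarith [hp2, hspos, hp]
    have hzmz : zm ≤ z := by
      rw [hzm_iff]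
      have : 0 < 4 * (γ - 1) * z := by positivity
      linarith
    constructor
    · rintro ⟨h1, h2⟩
      exact Or.inr ⟨ha, h2⟩
    · rintro (⟨_, h1, h2⟩ | ⟨_, h2⟩)
      · exact ⟨h1, h2⟩
      · exact ⟨hzmz, h2⟩
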